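/- For every matrix A ∈ F^{n×n} there exists a maximal vector, i.e. a vector v ∈ F^n whose minimal polynomial with respect to A equals the minimal polynomial of A. -/

import Mathlib

open Polynomial Matrix

/-- `p` is the minimal polynomial of the vector `v` with respect to the matrix `A`
(row vectors, right multiplication). -/
def IsVecMinpoly {F : Type*} [Field F] {n : ℕ} (A : Matrix (Fin n) (Fin n) F)
    (v : Fin n → F) (p : F[X]) : Prop :=
  p.Monic ∧ v ᵥ* (aeval A p) = 0 ∧ ∀ q : F[X], v ᵥ* (aeval A q) = 0 → p ∣ q

/-- The `A`-span `⟨v⟩_A = {v·p(A) : p ∈ F[X]}` of a vector `v`. -/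
def aspan {F : Type*} [Field F] {n : ℕ} (A : Matrix (Fin n) (Fin n) F)
    (v : Fin n → F) : Submodule F (Fin n → F) :=
  Submodule.span F {w | ∃ p : F[X], w = v ᵥ* (aeval A p)}

/-- The companion matrix of a polynomial `p` (for the right-multiplication convention):
identity superdiagonal block, last row the negated coefficients of `p`. -/
def companion {F : Type*} [Field F] (n : ℕ) (p : F[X]) : Matrix (Fin n) (Fin n) F :=
  Matrix.of fun i j => if (i : ℕ) = n - 1 then -p.coeff j
    else if (i : ℕ) + 1 = (j : ℕ) then 1 else 0


section Aux

variable {F : Type*} [Field F] {n : ℕ} (A : Matrix (Fin n) (Fin n) F)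

/-- `d` generates the annihilator ideal of `v`. -/
private def VMP (v : Fin n → F) (d : F[X]) : Prop :=
  ∀ q : F[X], v ᵥ* (aeval A q) = 0 ↔ d ∣ q

variable {A}

private lemma ann_mul {v : Fin n → F} {p : F[X]} (h : v ᵥ* aeval A p = 0) (q : F[X]) :
    v ᵥ* aeval A (p * q) = 0 := by
  rw [_root_.map_mul, ← Matrix.vecMul_vecMul, h, Matrix.zero_vecMul]

private lemma ann_dvd {v : Fin n → F} {p q : F[X]} (h : v ᵥ* aeval A p = 0) (hpq : p ∣ q) :
    v ᵥ* aeval A q = 0 := by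
  obtain ⟨r, rfl⟩ := hpq; exact ann_mul h r

private lemma ann_add {v : Fin n → F} {p q : F[X]} (hp : v ᵥ* aeval A p = 0)
    (hq : v ᵥ* aeval A q = 0) : v ᵥ* aeval A (p + q) = 0 := by
  rw [_root_.map_add, Matrix.vecMul_add, hp, hq, add_zero]

private lemma ann_of_minpoly_dvd {q : F[X]} (h : minpoly F A ∣ q) (v : Fin n → F) :
    v ᵥ* aeval A q = 0 := by
  obtain ⟨r, rfl⟩ := h
  rw [_root_.map_mul, minpoly.aeval, zero_mul, Matrix.vecMul_zero]

private lemma exists_vec_ne_zero {q : F[X]} (h : ¬ minpoly F A ∣ q) :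
    ∃ v : Fin n → F, v ᵥ* aeval A q ≠ 0 := by
  by_contra hc
  push_neg at hc
  apply h
  apply minpoly.dvd
  ext i j
  have := congrFun (hc (Pi.single i 1)) j
  rwa [Matrix.single_one_vecMul] at this

/-- Combining coprime pieces. -/
private lemma vmp_add {u w : Fin n → F} {p q : F[X]} (hu : VMP A u p) (hw : VMP A w q)
    (hpq : IsCoprime p q) : VMP A (u + w) (p * q) := by
  intro r
  constructor
  · intro h
    have hp : p ∣ r := by
      have h1 : (u + w) ᵥ* aeval A (r * q) = 0 := ann_mul h q
      rw [Matrix.add_vecMul] at h1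
      have h2 : w ᵥ* aeval A (r * q) = 0 := (hw _).mpr (dvd_mul_left q r)
      rw [h2, add_zero] at h1
      exact hpq.dvd_of_dvd_mul_right ((hu _).mp h1)
    have hq : q ∣ r := by
      have h1 : (u + w) ᵥ* aeval A (r * p) = 0 := ann_mul h p
      rw [Matrix.add_vecMul] at h1
      have h2 : u ᵥ* aeval A (r * p) = 0 := (hu _).mpr (dvd_mul_left p r)
      rw [h2, zero_add] at h1
      exact hpq.symm.dvd_of_dvd_mul_right ((hw _).mp h1)
    exact hpq.mul_dvd hp hq
  · intro h
    rw [Matrix.add_vecMul, (hu _).mpr (dvd_trans (dvd_mul_right p q) h),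
      (hw _).mpr (dvd_trans (dvd_mul_left q p) h), add_zero]

/-- Realizing an exact prime power divisor of the minimal polynomial. -/
private lemma vmp_prime_pow {p c : F[X]} {e : ℕ} (hp : Prime p) (he : 1 ≤ e)
    (hmu : minpoly F A = p ^ e * c) (hpc : ¬ p ∣ c) :
    ∃ v : Fin n → F, VMP A v (p ^ e) := by
  classical
  have hA : IsIntegral F A := IsIntegral.of_finite F A
  have hmu0 : minpoly F A ≠ 0 := minpoly.ne_zero hA
  have hc0 : c ≠ 0 := by rintro rfl; simp [hmu] at hmu0
  have hp0 : p ≠ 0 := hp.ne_zero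
  -- μ does not divide c * p^(e-1)
  have hnd : ¬ minpoly F A ∣ c * p ^ (e - 1) := by
    rw [hmu]
    intro hdvd
    have h1 : (p ^ e * c) ∣ (p ^ (e - 1) * c) := by
      rwa [mul_comm c (p ^ (e - 1))] at hdvd
    have h2 : p ^ e ∣ p ^ (e - 1) := (mul_dvd_mul_iff_right hc0).mp h1
    have := (pow_dvd_pow_iff hp0 hp.not_unit).mp h2
    omega
  obtain ⟨v, hv⟩ := exists_vec_ne_zero hnd
  have key : ∀ s : F[X], (v ᵥ* aeval A c) ᵥ* aeval A s = v ᵥ* aeval A (c * s) := by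
    intro s; rw [Matrix.vecMul_vecMul, ← _root_.map_mul]
  refine ⟨v ᵥ* aeval A c, fun r => ?_⟩
  constructor
  · intro h
    rw [key] at h
    have hpe : (v ᵥ* aeval A c) ᵥ* aeval A (p ^ e) = 0 := by
      rw [key]
      exact ann_of_minpoly_dvd (by rw [hmu]; exact ⟨1, by ring⟩) v
    set d := EuclideanDomain.gcd r (p ^ e) with hd
    have hbez : d = r * EuclideanDomain.gcdA r (p ^ e) + p ^ e * EuclideanDomain.gcdB r (p ^ e) :=
      EuclideanDomain.gcd_eq_gcd_ab r (p ^ e)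
    have hannd : (v ᵥ* aeval A c) ᵥ* aeval A d = 0 := by
      rw [hbez]
      exact ann_add (ann_mul (by rw [key]; exact h) _) (ann_mul hpe _)
    have hdpe : d ∣ p ^ e := EuclideanDomain.gcd_dvd_right r (p ^ e)
    obtain ⟨k, hk, u, hu, hdu⟩ : ∃ k, k ≤ e ∧ ∃ u : F[X], IsUnit u ∧ d = u * p ^ k := by
      obtain ⟨k, hk, hassoc⟩ := (dvd_prime_pow hp e).mp hdpe
      obtain ⟨u, hu⟩ := hassoc.symm
      exact ⟨k, hk, u.1, u.isUnit, by rw [← hu, mul_comm]⟩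
    have hke : k = e := by
      by_contra hkne
      have hkle : k ≤ e - 1 := by omega
      have hdle : d ∣ p ^ (e - 1) := by
        rw [hdu, hu.mul_left_dvd]
        exact pow_dvd_pow p hkle
      have : (v ᵥ* aeval A c) ᵥ* aeval A (p ^ (e - 1)) = 0 := ann_dvd hannd hdle
      rw [key] at this
      exact hv this
    have hped : p ^ e ∣ d := by rw [hdu, hke]; exact dvd_mul_left _ _
    exact hped.trans (EuclideanDomain.gcd_dvd_left r (p ^ e))
  · intro h
    rw [key]
    refine ann_of_minpoly_dvd ?_ v
    rw [hmu, mul_comm (p ^ e) c]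
    exact mul_dvd_mul_left c h

/-- A vector can be found for any "unitary" divisor of μ. -/
private lemma vmp_unitary : ∀ (N : ℕ) (d c : F[X]), d.natDegree ≤ N →
    minpoly F A = d * c → IsCoprime d c → ∃ v : Fin n → F, VMP A v d := by
  have hA : IsIntegral F A := IsIntegral.of_finite F A
  have hmu0 : minpoly F A ≠ 0 := minpoly.ne_zero hA
  intro N
  induction N with
  | zero =>
    intro d c hdeg hmu _
    have hd0 : d ≠ 0 := by rintro rfl; simp at hmu; exact hmu0 hmu
    have hdu : IsUnit d := by
      rw [Polynomial.isUnit_iff_degree_eq_zero]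
      have := Polynomial.natDegree_eq_zero_iff_degree_le_zero.mp (Nat.le_zero.mp hdeg)
      exact le_antisymm this (Polynomial.zero_le_degree_iff.mpr hd0)
    exact ⟨0, fun q => by simp [Matrix.zero_vecMul, hdu.dvd]⟩
  | succ N ih =>
    intro d c hdeg hmu hcop
    have hd0 : d ≠ 0 := by rintro rfl; simp at hmu; exact hmu0 hmu
    by_cases hdu : IsUnit d
    · exact ⟨0, fun q => by simp [Matrix.zero_vecMul, hdu.dvd]⟩
    obtain ⟨p, hp, hpd⟩ : ∃ p, Prime p ∧ p ∣ d := by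
      obtain ⟨i, hi, hidvd⟩ := WfDvdMonoid.exists_irreducible_factor hdu hd0
      exact ⟨i, hi.prime, hidvd⟩
    have hfin : FiniteMultiplicity p d := FiniteMultiplicity.of_not_isUnit hp.not_unit hd0
    obtain ⟨d', hd', hpd'⟩ := hfin.exists_eq_pow_mul_and_not_dvd
    set e := multiplicity p d with hedef
    have he : 1 ≤ e := by
      by_contra hlt
      have : e = 0 := by omega
      rw [this, pow_zero, one_mul] at hd'
      exact hpd' (hd' ▸ hpd)
    have hd'0 : d' ≠ 0 := by rintro rfl; rw [mul_zero] at hd'; exact hd0 hd'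
    have hp0 : p ≠ 0 := hp.ne_zero
    -- p does not divide c
    have hpc : ¬ p ∣ c := fun hdvd => hp.not_unit (hcop.isUnit_of_dvd' hpd hdvd)
    -- realize p^e
    have hmu2 : minpoly F A = p ^ e * (d' * c) := by rw [hmu, hd']; ring
    have hpd'c : ¬ p ∣ d' * c := fun hdvd => (hp.dvd_mul.mp hdvd).elim hpd' hpc
    obtain ⟨v1, hv1⟩ := vmp_prime_pow hp he hmu2 hpd'c
    -- realize d' by induction
    have hdegp : 1 ≤ p.natDegree := by
      rcases Nat.eq_zero_or_pos p.natDegree with h0 | h1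
      · exact absurd (Polynomial.isUnit_iff_degree_eq_zero.mpr
          (Polynomial.natDegree_eq_zero_iff_degree_le_zero.mp h0 |>.antisymm
            (Polynomial.zero_le_degree_iff.mpr hp0))) hp.not_unit
      · exact h1
    have hdeg' : d'.natDegree ≤ N := by
      have h1 : d.natDegree = e * p.natDegree + d'.natDegree := by
        rw [hd', Polynomial.natDegree_mul (pow_ne_zero e hp0) hd'0,
          Polynomial.natDegree_pow]
      have : 1 ≤ e * p.natDegree := Nat.one_le_iff_ne_zero.mpr (by positivity)
      omega
    have hcopd'p : IsCoprime d' p := ((hp.coprime_iff_not_dvd).mpr hpd').symm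
    have hcopd'c : IsCoprime d' c := hcop.of_isCoprime_of_dvd_left ⟨p ^ e, by rw [hd']; ring⟩
    have hmu3 : minpoly F A = d' * (p ^ e * c) := by rw [hmu, hd']; ring
    obtain ⟨v2, hv2⟩ := ih d' (p ^ e * c) hdeg' hmu3 ((hcopd'p.pow_right).mul_right hcopd'c)
    refine ⟨v1 + v2, ?_⟩
    rw [hd']
    exact vmp_add hv1 hv2 (hcopd'p.symm.pow_left)

end Aux

/-- Every matrix has a maximal vector: a vector whose minimal polynomial equals `μ_A`. -/
theorem stmt11 {F : Type*} [Field F] {n : ℕ} (A : Matrix (Fin n) (Fin n) F) :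
    ∃ v : Fin n → F, IsVecMinpoly A v (minpoly F A) := by
  have hA : IsIntegral F A := IsIntegral.of_finite F A
  obtain ⟨v, hv⟩ := vmp_unitary (minpoly F A).natDegree (minpoly F A) 1 le_rfl
    (mul_one _).symm isCoprime_one_right
  exact ⟨v, minpoly.monic hA, (hv _).mpr dvd_rfl, fun q h => (hv q).mp h⟩
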